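/- Let q, x, y ∈ ℂ with 0 < |q| < 1 and x ≠ 0, y ≠ 0. Then all series below converge absolutely and (Σ_{a∈ℤ} q^{2a²} x^a)·(Σ_{b∈ℤ} q^{2b²} y^b) = (Σ_{m∈ℤ} q^{4m²} (xy)^m)·(Σ_{n∈ℤ} q^{4n²} (x y⁻¹)^n) + q² x · (Σ_{m∈ℤ} q^{4m²+4m} (xy)^m)·(Σ_{n∈ℤ} q^{4n²+4n} (x y⁻¹)^n). -/

import Mathlib

open Filter Topology

lemma auxN (r c : ℝ) (hr0 : 0 < r) (hr1 : r < 1) (hc : 0 < c) (k l : ℤ) (hk : 0 < k) :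
    Summable fun n : ℕ => r ^ (k * (n:ℤ) ^ 2 + l * n) * c ^ (n:ℤ) := by
  have hr0' : r ≠ 0 := hr0.ne'
  have hterm : ∀ n : ℕ, r ^ (k * (n:ℤ) ^ 2 + l * n) * c ^ (n:ℤ) ≠ 0 := fun n =>
    mul_ne_zero (zpow_ne_zero _ hr0') (zpow_ne_zero _ hc.ne')
  apply summable_of_ratio_test_tendsto_lt_one (l := 0) one_pos (Eventually.of_forall hterm)
  have hpos : ∀ n : ℕ, 0 < r ^ (k * (n:ℤ) ^ 2 + l * n) * c ^ (n:ℤ) := fun n =>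
    mul_pos (zpow_pos hr0 _) (zpow_pos hc _)
  have heq : ∀ n : ℕ, ‖r ^ (k * ((n:ℤ)+1) ^ 2 + l * ((n:ℤ)+1)) * c ^ ((n:ℤ)+1)‖ /
      ‖r ^ (k * (n:ℤ) ^ 2 + l * n) * c ^ (n:ℤ)‖ = (r ^ (2*k)) ^ n * (r ^ (k + l) * c) := by
    intro n
    rw [Real.norm_of_nonneg (by positivity), Real.norm_of_nonneg (hpos n).le]
    rw [show (k * ((n:ℤ)+1) ^ 2 + l * ((n:ℤ)+1)) = (k * (n:ℤ)^2 + l*n) + (2*k*n + (k+l)) by ring,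
      zpow_add₀ hr0', zpow_add₀ hc.ne', zpow_one, zpow_add₀ hr0' (2*k*n), zpow_mul r (2*k) (n:ℤ), zpow_natCast]
    field_simp
  have h2k : r ^ (2*k) < 1 := by
    rw [show (2*k) = ((2*k).toNat : ℤ) by omega, zpow_natCast]
    exact pow_lt_one₀ hr0.le hr1 (by omega)
  have := (tendsto_pow_atTop_nhds_zero_of_lt_one (zpow_pos hr0 (2*k)).le h2k).mul_const
    (r ^ (k + l) * c)
  simpa [heq] using this.congr (fun n => (heq n).symm) |>.congr (fun n => rfl)

lemma auxZ (r c : ℝ) (hr0 : 0 < r) (hr1 : r < 1) (hc : 0 < c) (k l : ℤ) (hk : 0 < k) :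
    Summable fun a : ℤ => r ^ (k * a ^ 2 + l * a) * c ^ a := by
  apply Summable.of_nat_of_neg
  · exact auxN r c hr0 hr1 hc k l hk
  · have := auxN r c⁻¹ hr0 hr1 (inv_pos.mpr hc) k (-l) hk
    refine this.congr fun n => ?_
    rw [show (k * (-(n:ℤ)) ^ 2 + l * (-(n:ℤ))) = k * (n:ℤ)^2 + (-l) * n by ring,
      zpow_neg, ← inv_zpow]

lemma auxC (q x : ℂ) (hq0 : 0 < ‖q‖) (hq1 : ‖q‖ < 1) (hx : x ≠ 0)
    (k l : ℤ) (hk : 0 < k) :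
    Summable fun a : ℤ => ‖q ^ (k * a ^ 2 + l * a) * x ^ a‖ := by
  have := auxZ (‖q‖) (‖x‖) hq0 hq1 (by simpa using hx) k l hk
  refine this.congr fun a => ?_
  simp [norm_mul, norm_zpow]

def evenEquiv : (ℤ × ℤ) ≃ {p : ℤ × ℤ // (p.1 + p.2) % 2 = 0} where
  toFun p := ⟨(p.1 + p.2, p.1 - p.2), by omega⟩
  invFun p := ((p.1.1 + p.1.2) / 2, (p.1.1 - p.1.2) / 2)
  left_inv p := by obtain ⟨m, n⟩ := p; simp; omega
  right_inv p := by
    obtain ⟨⟨a, b⟩, h⟩ := p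
    simp only [Set.mem_setOf_eq] at h
    ext <;> simp <;> omega

def oddEquiv : (ℤ × ℤ) ≃ {p : ℤ × ℤ // ¬ (p.1 + p.2) % 2 = 0} where
  toFun p := ⟨(p.1 + p.2 + 1, p.1 - p.2), by omega⟩
  invFun p := ((p.1.1 + p.1.2 - 1) / 2, (p.1.1 - p.1.2 - 1) / 2)
  left_inv p := by obtain ⟨m, n⟩ := p; simp; omega
  right_inv p := by
    obtain ⟨⟨a, b⟩, h⟩ := p
    simp only [Set.mem_setOf_eq] at h
    ext <;> simp <;> omega

lemma keyEven (q x y : ℂ) (hq : q ≠ 0) (hx : x ≠ 0) (hy : y ≠ 0) (m n : ℤ) :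
    q ^ (2 * (m + n) ^ 2) * x ^ (m + n) * (q ^ (2 * (m - n) ^ 2) * y ^ (m - n)) =
      q ^ (4 * m ^ 2) * (x * y) ^ m * (q ^ (4 * n ^ 2) * (x * y⁻¹) ^ n) := by
  rw [mul_zpow, mul_zpow, inv_zpow, ← zpow_neg,
    zpow_add₀ hx, show m - n = m + (-n) by ring, zpow_add₀ hy,
    show (2 * (m + n) ^ 2 : ℤ) = 4 * m ^ 2 + (4 * n ^ 2 - 2 * (m + (-n)) ^ 2) by ring,
    zpow_add₀ hq, show (4 * n ^ 2 - 2 * (m + (-n)) ^ 2 : ℤ)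
      = (4 * n ^ 2) + (-(2 * (m + (-n)) ^ 2)) by ring, zpow_add₀ hq]
  have hc : q ^ (-(2 * (m + (-n)) ^ 2)) * q ^ (2 * (m + (-n)) ^ 2) = 1 := by
    rw [← zpow_add₀ hq]; simp
  calc q ^ (4 * m ^ 2) * (q ^ (4 * n ^ 2) * q ^ (-(2 * (m + -n) ^ 2))) * (x ^ m * x ^ n) *
      (q ^ (2 * (m + -n) ^ 2) * (y ^ m * y ^ (-n)))
      = (q ^ (-(2 * (m + -n) ^ 2)) * q ^ (2 * (m + -n) ^ 2)) *
        (q ^ (4 * m ^ 2) * (x ^ m * y ^ m) * (q ^ (4 * n ^ 2) * (x ^ n * y ^ (-n)))) := by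
        ring
    _ = q ^ (4 * m ^ 2) * (x ^ m * y ^ m) * (q ^ (4 * n ^ 2) * (x ^ n * y ^ (-n))) := by
        rw [hc, one_mul]

lemma keyOdd (q x y : ℂ) (hq : q ≠ 0) (hx : x ≠ 0) (hy : y ≠ 0) (m n : ℤ) :
    q ^ (2 * (m + n + 1) ^ 2) * x ^ (m + n + 1) * (q ^ (2 * (m - n) ^ 2) * y ^ (m - n)) =
      q ^ 2 * x * (q ^ (4 * m ^ 2 + 4 * m) * (x * y) ^ m *
        (q ^ (4 * n ^ 2 + 4 * n) * (x * y⁻¹) ^ n)) := by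
  rw [mul_zpow, mul_zpow, inv_zpow, ← zpow_neg,
    zpow_add₀ hx (m + n) 1, zpow_add₀ hx m n, zpow_one,
    show m - n = m + (-n) by ring, zpow_add₀ hy,
    show (2 * (m + n + 1) ^ 2 : ℤ) = (4 * m ^ 2 + 4 * m) +
      ((4 * n ^ 2 + 4 * n) + ((2 : ℤ) + (-(2 * (m + (-n)) ^ 2)))) by ring,
    zpow_add₀ hq (4 * m ^ 2 + 4 * m) ((4 * n ^ 2 + 4 * n) + ((2 : ℤ) + (-(2 * (m + (-n)) ^ 2)))),
    zpow_add₀ hq (4 * n ^ 2 + 4 * n) ((2 : ℤ) + (-(2 * (m + (-n)) ^ 2))),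
    zpow_add₀ hq (2 : ℤ) (-(2 * (m + (-n)) ^ 2)),
    show q ^ ((2 : ℤ)) = q ^ (2 : ℕ) by rw [show ((2:ℤ)) = ((2:ℕ):ℤ) from rfl, zpow_natCast]]
  have hc : q ^ (-(2 * (m + -n) ^ 2)) * q ^ (2 * (m + -n) ^ 2) = 1 := by
    rw [← zpow_add₀ hq]; simp
  calc q ^ (4 * m ^ 2 + 4 * m) * (q ^ (4 * n ^ 2 + 4 * n) * (q ^ (2 : ℕ) * q ^ (-(2 * (m + -n) ^ 2)))) *
        (x ^ m * x ^ n * x) * (q ^ (2 * (m + -n) ^ 2) * (y ^ m * y ^ (-n)))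
      = (q ^ (-(2 * (m + -n) ^ 2)) * q ^ (2 * (m + -n) ^ 2)) *
        (q ^ (2 : ℕ) * x * (q ^ (4 * m ^ 2 + 4 * m) * (x ^ m * y ^ m) *
          (q ^ (4 * n ^ 2 + 4 * n) * (x ^ n * y ^ (-n))))) := by ring
    _ = q ^ (2 : ℕ) * x * (q ^ (4 * m ^ 2 + 4 * m) * (x ^ m * y ^ m) *
          (q ^ (4 * n ^ 2 + 4 * n) * (x ^ n * y ^ (-n)))) := by rw [hc, one_mul]

theorem stmt5 (q x y : ℂ) (hq0 : 0 < ‖q‖) (hq1 : ‖q‖ < 1)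
    (hx : x ≠ 0) (hy : y ≠ 0) :
    (Summable fun a : ℤ => ‖q ^ (2 * a ^ 2) * x ^ a‖) ∧
    (Summable fun b : ℤ => ‖q ^ (2 * b ^ 2) * y ^ b‖) ∧
    (Summable fun m : ℤ => ‖q ^ (4 * m ^ 2) * (x * y) ^ m‖) ∧
    (Summable fun n : ℤ => ‖q ^ (4 * n ^ 2) * (x * y⁻¹) ^ n‖) ∧
    (Summable fun m : ℤ => ‖q ^ (4 * m ^ 2 + 4 * m) * (x * y) ^ m‖) ∧
    (Summable fun n : ℤ => ‖q ^ (4 * n ^ 2 + 4 * n) * (x * y⁻¹) ^ n‖) ∧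
    (∑' a : ℤ, q ^ (2 * a ^ 2) * x ^ a) * (∑' b : ℤ, q ^ (2 * b ^ 2) * y ^ b) =
      (∑' m : ℤ, q ^ (4 * m ^ 2) * (x * y) ^ m) *
        (∑' n : ℤ, q ^ (4 * n ^ 2) * (x * y⁻¹) ^ n) +
      q ^ 2 * x * ((∑' m : ℤ, q ^ (4 * m ^ 2 + 4 * m) * (x * y) ^ m) *
        (∑' n : ℤ, q ^ (4 * n ^ 2 + 4 * n) * (x * y⁻¹) ^ n)) := by
  have hq : q ≠ 0 := by intro h; simp [h] at hq0
  have hxy : x * y ≠ 0 := mul_ne_zero hx hy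
  have hxy' : x * y⁻¹ ≠ 0 := mul_ne_zero hx (inv_ne_zero hy)
  have S1 : Summable fun a : ℤ => ‖q ^ (2 * a ^ 2) * x ^ a‖ := by
    simpa using auxC q x hq0 hq1 hx 2 0 (by norm_num)
  have S2 : Summable fun b : ℤ => ‖q ^ (2 * b ^ 2) * y ^ b‖ := by
    simpa using auxC q y hq0 hq1 hy 2 0 (by norm_num)
  have S3 : Summable fun m : ℤ => ‖q ^ (4 * m ^ 2) * (x * y) ^ m‖ := by
    simpa using auxC q (x * y) hq0 hq1 hxy 4 0 (by norm_num)
  have S4 : Summable fun n : ℤ => ‖q ^ (4 * n ^ 2) * (x * y⁻¹) ^ n‖ := by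
    simpa using auxC q (x * y⁻¹) hq0 hq1 hxy' 4 0 (by norm_num)
  have S5 : Summable fun m : ℤ => ‖q ^ (4 * m ^ 2 + 4 * m) * (x * y) ^ m‖ :=
    auxC q (x * y) hq0 hq1 hxy 4 4 (by norm_num)
  have S6 : Summable fun n : ℤ => ‖q ^ (4 * n ^ 2 + 4 * n) * (x * y⁻¹) ^ n‖ :=
    auxC q (x * y⁻¹) hq0 hq1 hxy' 4 4 (by norm_num)
  refine ⟨S1, S2, S3, S4, S5, S6, ?_⟩
  set F : ℤ × ℤ → ℂ :=
    fun p => q ^ (2 * p.1 ^ 2) * x ^ p.1 * (q ^ (2 * p.2 ^ 2) * y ^ p.2) with hF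
  have hFsum : Summable F := (S1.mul_norm S2).of_norm
  set s : Set (ℤ × ℤ) := {p | (p.1 + p.2) % 2 = 0} with hs
  calc (∑' a : ℤ, q ^ (2 * a ^ 2) * x ^ a) * (∑' b : ℤ, q ^ (2 * b ^ 2) * y ^ b)
      = ∑' p : ℤ × ℤ, F p := tsum_mul_tsum_of_summable_norm S1 S2
    _ = (∑' p : s, F p) + ∑' p : ↑sᶜ, F p :=
        (Summable.tsum_add_tsum_compl (hFsum.subtype _) (hFsum.subtype _)).symm
    _ = (∑' m : ℤ, q ^ (4 * m ^ 2) * (x * y) ^ m) *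
          (∑' n : ℤ, q ^ (4 * n ^ 2) * (x * y⁻¹) ^ n) +
        q ^ 2 * x * ((∑' m : ℤ, q ^ (4 * m ^ 2 + 4 * m) * (x * y) ^ m) *
          (∑' n : ℤ, q ^ (4 * n ^ 2 + 4 * n) * (x * y⁻¹) ^ n)) := by
        congr 1
        · calc (∑' p : s, F ↑p) = ∑' p : ℤ × ℤ, F ↑(evenEquiv p) := (evenEquiv.tsum_eq _).symm
            _ = ∑' p : ℤ × ℤ, (q ^ (4 * p.1 ^ 2) * (x * y) ^ p.1) *
                  (q ^ (4 * p.2 ^ 2) * (x * y⁻¹) ^ p.2) :=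
                tsum_congr fun p => keyEven q x y hq hx hy p.1 p.2
            _ = (∑' m : ℤ, q ^ (4 * m ^ 2) * (x * y) ^ m) *
                  (∑' n : ℤ, q ^ (4 * n ^ 2) * (x * y⁻¹) ^ n) :=
                (tsum_mul_tsum_of_summable_norm S3 S4).symm
        · calc (∑' p : ↑sᶜ, F ↑p) = ∑' p : ℤ × ℤ, F ↑(oddEquiv p) := (oddEquiv.tsum_eq _).symm
            _ = ∑' p : ℤ × ℤ, q ^ 2 * x * ((q ^ (4 * p.1 ^ 2 + 4 * p.1) * (x * y) ^ p.1) *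
                  (q ^ (4 * p.2 ^ 2 + 4 * p.2) * (x * y⁻¹) ^ p.2)) :=
                tsum_congr fun p => keyOdd q x y hq hx hy p.1 p.2
            _ = q ^ 2 * x * ∑' p : ℤ × ℤ, (q ^ (4 * p.1 ^ 2 + 4 * p.1) * (x * y) ^ p.1) *
                  (q ^ (4 * p.2 ^ 2 + 4 * p.2) * (x * y⁻¹) ^ p.2) := tsum_mul_left
            _ = q ^ 2 * x * ((∑' m : ℤ, q ^ (4 * m ^ 2 + 4 * m) * (x * y) ^ m) *
                  (∑' n : ℤ, q ^ (4 * n ^ 2 + 4 * n) * (x * y⁻¹) ^ n)) := by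
                rw [tsum_mul_tsum_of_summable_norm S5 S6]
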